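/- Let p and p̃ be probability mass functions on a finite type V, let ε_rec > 0 with p̃(x) ≥ ε_rec for all x, let C > 0, α > 0, and let k be a positive real with k ≥ (2C/ε_rec)^{1/α}. If TV(p, p̃) ≤ C·k^{−α}, then KL(p‖p̃) ≤ (2/ε_rec)·C²·k^{−2α}. -/

import Mathlib

open Finset

/-- Total variation distance between two pmfs on a finite type. -/
noncomputable def TV {V : Type*} [Fintype V] (p q : V → ℝ) : ℝ :=
  (1 / 2) * ∑ x, |p x - q x|

/-- Kullback–Leibler divergence between two pmfs on a finite type. -/
noncomputable def KL {V : Type*} [Fintype V] (p q : V → ℝ) : ℝ :=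
  ∑ x, p x * Real.log (p x / q x)

/-- Sink-plus-recent KL bound, bounded-floor route: with reconstruction floor
`εrec`, budget `k ≥ (2C/εrec)^{1/α}` and `TV(p,p̃) ≤ C·k^{−α}`, one has
`KL(p‖p̃) ≤ (2/εrec)·C²·k^{−2α}`. -/
theorem sink_plus_recent_kl {V : Type*} [Fintype V] (p ptilde : V → ℝ)
    (εrec C α k : ℝ)
    (hεrec : 0 < εrec) (hC : 0 < C) (hα : 0 < α) (hk0 : 0 < k)
    (hp0 : ∀ x, 0 ≤ p x) (hp1 : ∑ x, p x = 1)
    (hq0 : ∀ x, 0 ≤ ptilde x) (hq1 : ∑ x, ptilde x = 1)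
    (hfloor : ∀ x, εrec ≤ ptilde x)
    (hk : (2 * C / εrec) ^ (1 / α) ≤ k)
    (hTV : TV p ptilde ≤ C * k ^ (-α)) :
    KL p ptilde ≤ (2 / εrec) * C ^ 2 * k ^ (-(2 * α)) := by
  classical
  have hqpos : ∀ x, 0 < ptilde x := fun x => lt_of_lt_of_le hεrec (hfloor x)
  set S := ∑ x, |p x - ptilde x| with hS
  have hTVdef : TV p ptilde = (1 / 2) * S := rfl
  have hsum0 : ∑ x, (p x - ptilde x) = 0 := by
    rw [Finset.sum_sub_distrib, hp1, hq1]; ring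
  -- pointwise |p x - ptilde x| ≤ TV
  have hpt : ∀ x, |p x - ptilde x| ≤ TV p ptilde := by
    intro x
    have h1 : (p x - ptilde x) + ∑ y ∈ univ.erase x, (p y - ptilde y) = 0 := by
      rw [Finset.add_sum_erase univ (fun y => p y - ptilde y) (mem_univ x)]
      exact hsum0
    have h2 : |p x - ptilde x| ≤ ∑ y ∈ univ.erase x, |p y - ptilde y| := by
      have : p x - ptilde x = -∑ y ∈ univ.erase x, (p y - ptilde y) := by linarith
      rw [this, abs_neg]
      exact Finset.abs_sum_le_sum_abs _ _
    have h3 : ∑ y ∈ univ.erase x, |p y - ptilde y| = S - |p x - ptilde x| := by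
      rw [Finset.sum_erase_eq_sub (mem_univ x)]
    rw [hTVdef]
    linarith
  have hTV0 : 0 ≤ TV p ptilde := by
    rw [hTVdef]
    have : 0 ≤ S := Finset.sum_nonneg fun x _ => abs_nonneg _
    linarith
  -- pointwise KL term bound
  have hterm : ∀ x, p x * Real.log (p x / ptilde x)
      ≤ (p x - ptilde x) ^ 2 / ptilde x + (p x - ptilde x) := by
    intro x
    rcases eq_or_lt_of_le (hp0 x) with h0 | h0
    · rw [← h0, zero_mul]
      have hqne := (hqpos x).ne'
      have h00 : ((0:ℝ) - ptilde x) ^ 2 / ptilde x + (0 - ptilde x) = 0 := by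
        rw [zero_sub, neg_sq, sq, mul_div_assoc, div_self hqne]; ring
      linarith
    · have hlog : Real.log (p x / ptilde x) ≤ p x / ptilde x - 1 :=
        Real.log_le_sub_one_of_pos (div_pos h0 (hqpos x))
      have h4 : p x * Real.log (p x / ptilde x) ≤ p x * (p x / ptilde x - 1) :=
        mul_le_mul_of_nonneg_left hlog (hp0 x)
      have h5 : p x * (p x / ptilde x - 1)
          = (p x - ptilde x) ^ 2 / ptilde x + (p x - ptilde x) := by
        field_simp [(hqpos x).ne']
        ring
      linarith
  have hKL1 : KL p ptilde ≤ ∑ x, (p x - ptilde x) ^ 2 / ptilde x := by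
    have := Finset.sum_le_sum (fun x (_ : x ∈ univ) => hterm x)
    rw [Finset.sum_add_distrib, hsum0, add_zero] at this
    exact this
  have hKL2 : ∑ x, (p x - ptilde x) ^ 2 / ptilde x
      ≤ (TV p ptilde * S) / εrec := by
    calc ∑ x, (p x - ptilde x) ^ 2 / ptilde x
        ≤ ∑ x, TV p ptilde * |p x - ptilde x| / εrec := by
          apply Finset.sum_le_sum
          intro x _
          have hsq : (p x - ptilde x) ^ 2 ≤ TV p ptilde * |p x - ptilde x| := by
            rw [← sq_abs, sq]
            exact mul_le_mul_of_nonneg_right (hpt x) (abs_nonneg _)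
          exact div_le_div₀ (by positivity) hsq hεrec (hfloor x)
        _ = (TV p ptilde * S) / εrec := by
          rw [← Finset.sum_div, ← Finset.mul_sum]
  have hpow : k ^ (-(2 * α)) = (k ^ (-α)) ^ 2 := by
    rw [sq, ← Real.rpow_add hk0]
    congr 1; ring
  have hTVsq : TV p ptilde * S ≤ 2 * (C * k ^ (-α)) ^ 2 := by
    have hSle : S ≤ 2 * (C * k ^ (-α)) := by
      rw [hTVdef] at hTV; linarith
    have hS0 : 0 ≤ S := Finset.sum_nonneg fun x _ => abs_nonneg _
    have : TV p ptilde * S ≤ (C * k ^ (-α)) * (2 * (C * k ^ (-α))) := by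
      apply mul_le_mul hTV hSle hS0
      positivity
    nlinarith
  calc KL p ptilde ≤ (TV p ptilde * S) / εrec := le_trans hKL1 hKL2
    _ ≤ (2 * (C * k ^ (-α)) ^ 2) / εrec := by
        exact (div_le_div_iff_of_pos_right hεrec).mpr hTVsq
    _ = (2 / εrec) * C ^ 2 * k ^ (-(2 * α)) := by
        rw [hpow]; field_simp
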